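/- Let χ be a proper partial L-coloring of a hypergraph H, and let S ⊆ V₀ (the uncolored vertices) be such that no edge of H is contained in V \ S. Fix any coloring χ_p of V₀ \ S from the lists, and let χ̂ = χ ∪ χ_p. Then χ extends to a proper L-coloring of H if and only if either (i) χ extends to a proper L-coloring χ′ with χ′ agreeing with χ_p on V₀ \ S, or (ii) there exists an edge H ∈ H, not an entirely-uncolored edge contained in S, with |χ̂(H \ S)| = 1 and χ extends to a proper L-coloring χ′ with χ′ constant on H ∩ S equal to the unique color in χ̂(H \ S). -/

import Mathlib

/-- χ' is a proper L-coloring of H extending the partial coloring χ. -/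
def ProperExt {V : Type*} [DecidableEq V] {k : ℕ} (H : Finset (Finset V))
    (L : V → Finset (Fin k)) (χ : V → Option (Fin k)) (χ' : V → Fin k) : Prop :=
  (∀ v a, χ v = some a → χ' v = a) ∧
  (∀ v, χ v = none → χ' v ∈ L v) ∧
  ∀ A ∈ H, ∃ u ∈ A, ∃ w ∈ A, χ' u ≠ χ' w

/-- Decomposition lemma: with S ⊆ V₀ meeting every edge and χ_p any list coloring of
V₀ \ S, χ extends to a proper L-coloring iff (i) some proper extension agrees with
χ_p on V₀ \ S, or (ii) some edge A (not an entirely-uncolored edge inside S) has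
|χ̂(A \ S)| = 1 and some proper extension is constant on A ∩ S with that color. -/
theorem stmt7 {V : Type*} [Fintype V] [DecidableEq V] (k : ℕ)
    (H : Finset (Finset V)) (L : V → Finset (Fin k))
    (χ : V → Option (Fin k)) (S : Finset V) (χp : V → Fin k)
    (hproper : ∀ A ∈ H, (∀ v ∈ A, χ v ≠ none) → ∃ u ∈ A, ∃ w ∈ A, χ u ≠ χ w)
    (hS : ∀ v ∈ S, χ v = none)
    (hmeet : ∀ A ∈ H, (A ∩ S).Nonempty)
    (hχp : ∀ v, χ v = none → v ∉ S → χp v ∈ L v) :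
    (∃ χ' : V → Fin k, ProperExt H L χ χ') ↔
      ((∃ χ' : V → Fin k, ProperExt H L χ χ' ∧
          ∀ v, χ v = none → v ∉ S → χ' v = χp v) ∨
       (∃ A ∈ H, ¬ (A ⊆ S ∧ ∀ v ∈ A, χ v = none) ∧
          ∃ a : Fin k, (A \ S).Nonempty ∧ (∀ v ∈ A \ S, (χ v).getD (χp v) = a) ∧
          ∃ χ' : V → Fin k, ProperExt H L χ χ' ∧ ∀ v ∈ A ∩ S, χ' v = a)) := by
  constructor
  · rintro ⟨χ', hfix, hlist, hprop⟩
    classical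
    set χ'' : V → Fin k := fun v => (χ v).getD (if v ∈ S then χ' v else χp v) with hχ''
    by_cases hgood : ∀ A ∈ H, ∃ u ∈ A, ∃ w ∈ A, χ'' u ≠ χ'' w
    · left
      refine ⟨χ'', ⟨?_, ?_, hgood⟩, ?_⟩
      · intro v a h; simp [hχ'', h]
      · intro v h; simp only [hχ'', h, Option.getD_none]
        split
        · exact hlist v h
        · exact hχp v h (by assumption)
      · intro v h hv; simp [hχ'', h, hv]
    · push_neg at hgood
      obtain ⟨A, hA, hmono⟩ := hgood
      right
      have hconst : ∀ u ∈ A, ∀ w ∈ A, χ'' u = χ'' w := hmono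
      obtain ⟨u₀, hu₀⟩ := hmeet A hA
      rw [Finset.mem_inter] at hu₀
      have hχu₀ : χ u₀ = none := hS u₀ hu₀.2
      set a : Fin k := χ' u₀ with ha
      have hu₀val : χ'' u₀ = a := by simp [hχ'', hχu₀, hu₀.2, ha]
      -- A is not contained in S
      have hnotsub : ¬ A ⊆ S := by
        intro hsub
        obtain ⟨u, hu, w, hw, hne⟩ := hprop A hA
        apply hne
        have h1 : χ'' u = χ' u := by simp [hχ'', hS u (hsub hu), hsub hu]
        have h2 : χ'' w = χ' w := by simp [hχ'', hS w (hsub hw), hsub hw]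
        rw [← h1, ← h2]; exact hconst u hu w hw
      refine ⟨A, hA, fun h => hnotsub h.1, a, ?_, ?_, χ', ⟨hfix, hlist, hprop⟩, ?_⟩
      · rw [Finset.sdiff_nonempty]; exact hnotsub
      · intro v hv
        rw [Finset.mem_sdiff] at hv
        have : χ'' v = (χ v).getD (χp v) := by simp [hχ'', hv.2]
        rw [← this, hconst v hv.1 u₀ hu₀.1, hu₀val]
      · intro v hv
        rw [Finset.mem_inter] at hv
        have h1 : χ'' v = χ' v := by simp [hχ'', hS v hv.2, hv.2]
        rw [← h1, hconst v hv.1 u₀ hu₀.1, hu₀val]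
  · rintro (⟨χ', h, -⟩ | ⟨A, -, -, a, -, -, χ', h, -⟩) <;> exact ⟨χ', h⟩
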